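/- Let p be an odd prime and P a finite p-group. Then there exists a characteristic subgroup D of P such that every element of D has order dividing p, [D,P] ≤ Z(D), and every automorphism of P of order prime to p which fixes D pointwise is the identity. -/

import Mathlib

open scoped commutatorElement

/-- commutator power expansion in a "class ≤ 2" situation -/
private lemma pow_mul_comm_aux {G : Type*} [Group G] (a b c : G)
    (hc : b⁻¹ * a⁻¹ * b * a = c) (h1 : Commute c a) (h2 : Commute c b) :
    ∀ n : ℕ, (a * b) ^ n = a ^ n * b ^ n * c ^ (n.choose 2) := by
  have hba : b * a = a * b * c := by rw [← hc]; group
  have hpow : ∀ n : ℕ, b ^ n * a = a * b ^ n * c ^ n := by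
    intro n
    induction n with
    | zero => simp
    | succ n ih =>
      calc b ^ (n + 1) * a = b ^ n * (b * a) := by rw [pow_succ, mul_assoc]
        _ = b ^ n * a * (b * c) := by rw [hba]; group
        _ = a * b ^ n * c ^ n * (b * c) := by rw [ih]
        _ = a * b ^ n * (c ^ n * b) * c := by group
        _ = a * b ^ n * (b * c ^ n) * c := by rw [(h2.symm.pow_right n).eq]
        _ = a * b ^ (n + 1) * c ^ (n + 1) := by rw [pow_succ, pow_succ]; group
  intro n
  induction n with
  | zero => simp
  | succ n ih =>
    have hchoose : (n + 1).choose 2 = n.choose 2 + n := by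
      rw [Nat.choose_succ_succ, Nat.choose_one_right, Nat.add_comm]
    calc (a * b) ^ (n + 1) = (a * b) ^ n * (a * b) := by rw [pow_succ]
      _ = a ^ n * b ^ n * c ^ (n.choose 2) * a * b := by rw [ih]; group
      _ = a ^ n * b ^ n * (c ^ (n.choose 2) * a) * b := by group
      _ = a ^ n * b ^ n * (a * c ^ (n.choose 2)) * b := by rw [(h1.pow_left _).eq]
      _ = a ^ n * (b ^ n * a) * (c ^ (n.choose 2) * b) := by group
      _ = a ^ n * (b ^ n * a) * (b * c ^ (n.choose 2)) := by rw [(h2.pow_left _).eq]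
      _ = a ^ n * (a * b ^ n * c ^ n) * (b * c ^ (n.choose 2)) := by rw [hpow]
      _ = a ^ (n + 1) * b ^ n * (c ^ n * b) * c ^ (n.choose 2) := by rw [pow_succ]; group
      _ = a ^ (n + 1) * b ^ n * (b * c ^ n) * c ^ (n.choose 2) := by rw [(h2.symm.pow_right n).eq]
      _ = a ^ (n + 1) * b ^ (n + 1) * c ^ ((n + 1).choose 2) := by
          rw [hchoose, pow_add, pow_succ]; group

/-- if moreover `a^p` is centralized by `b` and `p` is odd, we get a clean `p`-th power formula -/
private lemma mul_pow_odd_prime {G : Type*} [Group G] {p : ℕ} (hp : Odd p) (a b c : G)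
    (hc : b⁻¹ * a⁻¹ * b * a = c) (h1 : Commute c a) (h2 : Commute c b)
    (h3 : b⁻¹ * a ^ p * b = a ^ p) : (a * b) ^ p = a ^ p * b ^ p := by
  have hconj : b⁻¹ * a * b = a * c⁻¹ := by rw [← hc]; group
  have hcp : c ^ p = 1 := by
    have hcj : (b⁻¹ * a * b⁻¹⁻¹) ^ p = b⁻¹ * a ^ p * b⁻¹⁻¹ := conj_pow
    rw [inv_inv] at hcj
    rw [hconj, h3, (h1.inv_left.symm).mul_pow] at hcj
    rw [mul_eq_left] at hcj
    rwa [inv_pow, inv_eq_one] at hcj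
  have h2div : 2 ∣ p - 1 := by
    obtain ⟨k, rfl⟩ := hp; omega
  have hchoose : p.choose 2 = p * ((p - 1) / 2) := by
    rw [Nat.choose_two_right, Nat.mul_div_assoc _ h2div]
  rw [pow_mul_comm_aux a b c hc h1 h2 p, hchoose, pow_mul, hcp, one_pow, mul_one]

open Subgroup in

/-- In a finite `p`-group `P` with normal subgroups `Z ≤ K`, `Z ≠ K`, there is an element of
`K` outside `Z` whose `p`-th power lies in `Z` and all of whose commutators with `P` lie in
`Z`. -/
private lemma exists_almost_central (p : ℕ) [Fact p.Prime] {P : Type} [Group P] [Finite P]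
    (hP : IsPGroup p P) (K Z : Subgroup P) [hKn : K.Normal] [hZn : Z.Normal]
    (hZK : Z ≤ K) (hne : ∃ k ∈ K, k ∉ Z) :
    ∃ x : P, x ∈ K ∧ x ∉ Z ∧ x ^ p ∈ Z ∧ ∀ g : P, ⁅x, g⁆ ∈ Z := by
  classical
  set Z' : Subgroup K := Z.subgroupOf K with hZ'
  have hmapZ : ∀ g : P, Z'.map ((MulAut.conjNormal g : MulAut K) : K →* K) = Z' := by
    intro g
    apply le_antisymm
    · rintro _ ⟨w, hw, rfl⟩
      simp only [hZ', SetLike.mem_coe, Subgroup.mem_subgroupOf] at hw ⊢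
      show ((MulAut.conjNormal g) w : P) ∈ Z
      rw [MulAut.conjNormal_apply]
      exact hZn.conj_mem _ hw g
    · intro z hz
      simp only [hZ', Subgroup.mem_subgroupOf] at hz
      refine ⟨(MulAut.conjNormal g).symm z, ?_, (MulAut.conjNormal g).apply_symm_apply z⟩
      simp only [hZ', SetLike.mem_coe, Subgroup.mem_subgroupOf, MulAut.conjNormal_symm_apply]
      simpa using hZn.conj_mem _ hz g⁻¹
  let ρfun : P → MulAut (K ⧸ Z') := fun g =>
    (QuotientGroup.congr Z' Z' (MulAut.conjNormal g) (hmapZ g) : K ⧸ Z' ≃* K ⧸ Z')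
  have hρmk : ∀ (g : P) (k : K), ρfun g (QuotientGroup.mk k) =
      QuotientGroup.mk (MulAut.conjNormal g k) := fun g k => rfl
  let ρ : P →* MulAut (K ⧸ Z') :=
    { toFun := ρfun
      map_one' := by
        refine MulEquiv.toMonoidHom_injective (MonoidHom.ext fun q => ?_)
        induction q using QuotientGroup.induction_on with
        | H k => simp [hρmk]
      map_mul' := fun g₁ g₂ => by
        refine MulEquiv.toMonoidHom_injective (MonoidHom.ext fun q => ?_)
        induction q using QuotientGroup.induction_on with
        | H k => simp [hρmk, mul_assoc] }
  letI : MulAction P (K ⧸ Z') := MulAction.compHom _ ρ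
  have hsmul : ∀ (g : P) (q : K ⧸ Z'), g • q = ρfun g q := fun _ _ => rfl
  have hQp : IsPGroup p (K ⧸ Z') := (hP.to_subgroup K).to_quotient Z'
  -- the quotient is nontrivial
  obtain ⟨k₀, hk₀K, hk₀Z⟩ := hne
  have hk₀ : (QuotientGroup.mk (⟨k₀, hk₀K⟩ : K) : K ⧸ Z') ≠ 1 := by
    rw [Ne, QuotientGroup.eq_one_iff, Subgroup.mem_subgroupOf]
    exact hk₀Z
  haveI : Nontrivial (K ⧸ Z') := ⟨_, _, hk₀⟩
  -- fixed points
  have hfix1 : (1 : K ⧸ Z') ∈ MulAction.fixedPoints P (K ⧸ Z') := by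
    intro g; rw [hsmul]; exact map_one _
  have hcard := hP.card_modEq_card_fixedPoints (K ⧸ Z')
  have hdvdQ : p ∣ Nat.card (K ⧸ Z') := by
    obtain ⟨n, hn⟩ := IsPGroup.iff_card.mp hQp
    have h1 : 1 < Nat.card (K ⧸ Z') := Finite.one_lt_card_iff_nontrivial.mpr inferInstance
    rcases n with _ | n
    · rw [hn] at h1; simp at h1
    · exact hn ▸ dvd_pow_self p n.succ_ne_zero
  have hdvdF : p ∣ Nat.card (MulAction.fixedPoints P (K ⧸ Z')) :=
    (Nat.modEq_zero_iff_dvd.mpr hdvdQ).symm.trans hcard |>.symm |> Nat.modEq_zero_iff_dvd.mp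
  have hpos : 0 < Nat.card (MulAction.fixedPoints P (K ⧸ Z')) :=
    Nat.card_pos_iff.mpr ⟨⟨⟨1, hfix1⟩⟩, inferInstance⟩
  have hlt : 1 < Nat.card (MulAction.fixedPoints P (K ⧸ Z')) := by
    have hp2 := (Fact.out : p.Prime).two_le
    have := Nat.le_of_dvd hpos hdvdF
    omega
  haveI : Nontrivial (MulAction.fixedPoints P (K ⧸ Z')) :=
    Finite.one_lt_card_iff_nontrivial.mp hlt
  obtain ⟨q, hq⟩ := exists_ne (⟨1, hfix1⟩ : MulAction.fixedPoints P (K ⧸ Z'))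
  have hq1 : (q : K ⧸ Z') ≠ 1 := fun h => hq (Subtype.ext h)
  have hqfix : ∀ g : P, ρfun g (q : K ⧸ Z') = q := fun g => (hsmul g q).symm.trans (q.2 g)
  -- pass to a power of order exactly p
  obtain ⟨k, hk⟩ := IsPGroup.iff_orderOf.mp hQp (q : K ⧸ Z')
  have hk1 : k ≠ 0 := by
    rintro rfl
    rw [pow_zero] at hk
    exact hq1 (orderOf_eq_one_iff.mp hk)
  set r : K ⧸ Z' := (q : K ⧸ Z') ^ (p ^ (k - 1)) with hr
  have hr1 : r ≠ 1 := by
    intro h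
    have hdvd : orderOf (q : K ⧸ Z') ∣ p ^ (k - 1) := orderOf_dvd_of_pow_eq_one h
    rw [hk] at hdvd
    have hle := Nat.le_of_dvd (Nat.pow_pos (Fact.out : p.Prime).pos) hdvd
    have hlt2 := Nat.pow_lt_pow_right (Fact.out : p.Prime).one_lt (show k - 1 < k by omega)
    omega
  have hrp : r ^ p = 1 := by
    have hpk : p ^ (k - 1) * p = p ^ k := by
      conv_rhs => rw [show k = (k - 1) + 1 by omega]
      rw [pow_succ]
    rw [hr, ← pow_mul, hpk, ← hk]
    exact pow_orderOf_eq_one _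
  have hrfix : ∀ g : P, ρfun g r = r := by
    intro g
    rw [hr, map_pow, hqfix]
  -- lift r to an element of K
  obtain ⟨x', hx'⟩ := QuotientGroup.mk'_surjective Z' r
  have hx'' : (x' : K ⧸ Z') = r := hx'
  refine ⟨(x' : P), x'.2, ?_, ?_, ?_⟩
  · intro hxZ
    apply hr1
    rw [← hx'']
    rw [QuotientGroup.eq_one_iff, hZ', Subgroup.mem_subgroupOf]
    exact hxZ
  · have h2 : ((x' ^ p : K) : K ⧸ Z') = 1 := by
      rw [QuotientGroup.mk_pow, hx'', hrp]
    have hmem : x' ^ p ∈ Z' := (QuotientGroup.eq_one_iff _).mp h2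
    rw [hZ', Subgroup.mem_subgroupOf] at hmem
    simpa using hmem
  · intro g
    have hfx := hrfix g
    rw [← hx'', hρmk, QuotientGroup.eq, hZ', Subgroup.mem_subgroupOf] at hfx
    have hz : (g * (x' : P) * g⁻¹)⁻¹ * (x' : P) ∈ Z := by
      simpa [MulAut.conjNormal_apply] using hfx
    have key : ⁅(x' : P), g⁆ = (x' : P) * ((g * (x' : P) * g⁻¹)⁻¹ * (x' : P)) * (x' : P)⁻¹ := by
      group
    rw [key]
    simpa [mul_assoc] using hZn.conj_mem _ hz (x' : P)


private lemma mem_char_iff {P : Type} [Group P] {H : Subgroup P} (h : H.Characteristic)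
    (φ : MulAut P) (x : P) : φ x ∈ H ↔ x ∈ H := by
  have h2 : H.comap φ.toMonoidHom = H := Subgroup.characteristic_iff_comap_eq.mp h φ
  constructor
  · intro hx
    have h3 : x ∈ H.comap φ.toMonoidHom := Subgroup.mem_comap.mpr hx
    rwa [h2] at h3
  · intro hx
    rw [← h2] at hx
    exact Subgroup.mem_comap.mp hx

private lemma char_of_fixed {P : Type} [Group P] {H : Subgroup P}
    (h : ∀ (φ : MulAut P), ∀ x : P, x ∈ H → φ x ∈ H) : H.Characteristic := by
  rw [Subgroup.characteristic_iff_le_map]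
  intro φ x hx
  exact Subgroup.mem_map.mpr ⟨φ.symm x, h φ.symm x hx, φ.apply_symm_apply x⟩

/-- **Thompson-type subgroup for odd `p`.** Every finite `p`-group `P` (`p` odd) has a
characteristic subgroup `D` of exponent dividing `p` with `[D,P] ≤ Z(D)` such that every
automorphism of `P` of order prime to `p` fixing `D` pointwise is the identity. -/
theorem exists_characteristic_detecting_subgroup_odd
    (p : ℕ) [Fact p.Prime] (hp : Odd p)
    (P : Type) [Group P] [Finite P] (hP : IsPGroup p P) :
    ∃ D : Subgroup P, D.Characteristic ∧ (∀ x ∈ D, x ^ p = 1) ∧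
      ⁅D, (⊤ : Subgroup P)⁆ ≤ D ⊓ Subgroup.centralizer (D : Set P) ∧
      ∀ φ : MulAut P, Nat.Coprime (orderOf φ) p → (∀ x ∈ D, φ x = x) → φ = 1 := by
  classical
  have hprime : p.Prime := Fact.out
  haveI : Finite (Subgroup P) :=
    Finite.of_injective (fun H : Subgroup P => (H : Set P)) SetLike.coe_injective
  -- the family of characteristic subgroups H with [H,P] ≤ Z(H) ≥ ℧₁(H)
  let Fam : Subgroup P → Prop := fun H =>
    H.Characteristic ∧ (∀ x ∈ H, ∀ y ∈ H, Commute (x ^ p) y) ∧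
      ∀ x ∈ H, ∀ g : P, ⁅x, g⁆ ∈ H ∧ ∀ y ∈ H, Commute ⁅x, g⁆ y
  have hbot : Fam ⊥ := by
    refine ⟨inferInstance, ?_, ?_⟩
    · intro x hx y hy
      rw [Subgroup.mem_bot] at hx; subst hx
      rw [one_pow]; exact Commute.one_left y
    · intro x hx g
      rw [Subgroup.mem_bot] at hx; subst hx
      have h1 : ⁅(1 : P), g⁆ = 1 := by rw [commutatorElement_def]; group
      rw [h1]
      exact ⟨Subgroup.one_mem _, fun y _ => Commute.one_left y⟩
  obtain ⟨C, hCF, hCmax⟩ := Set.Finite.exists_maximalFor id {H : Subgroup P | Fam H}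
    (Set.toFinite _) ⟨⊥, hbot⟩
  simp only [id] at hCmax
  obtain ⟨hCchar, hCpow, hCcomm⟩ := hCF
  haveI := hCchar
  have hCn : C.Normal := inferInstance
  -- the p-th power map is multiplicative on C
  have hCpsi : ∀ a ∈ C, ∀ b ∈ C, (a * b) ^ p = a ^ p * b ^ p := by
    intro a ha b hb
    obtain ⟨hcC, hccomm⟩ := hCcomm b⁻¹ (inv_mem hb) a⁻¹
    have hceq : b⁻¹ * a⁻¹ * b * a = ⁅b⁻¹, a⁻¹⁆ := by
      rw [commutatorElement_def]; group
    have h3 : b⁻¹ * a ^ p * b = a ^ p := by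
      have hc := (hCpow a ha b hb).eq
      calc b⁻¹ * a ^ p * b = b⁻¹ * (a ^ p * b) := by group
        _ = b⁻¹ * (b * a ^ p) := by rw [hc]
        _ = a ^ p := by group
    exact mul_pow_odd_prime hp a b _ hceq (hccomm a ha) (hccomm b hb) h3
  -- D = Ω₁(C)
  let D : Subgroup P :=
    { carrier := {x : P | x ∈ C ∧ x ^ p = 1}
      one_mem' := ⟨Subgroup.one_mem C, one_pow p⟩
      mul_mem' := by
        rintro a b ⟨haC, hap⟩ ⟨hbC, hbp⟩
        exact ⟨mul_mem haC hbC, by rw [hCpsi a haC b hbC, hap, hbp, one_mul]⟩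
      inv_mem' := by
        rintro a ⟨haC, hap⟩
        exact ⟨inv_mem haC, by rw [inv_pow, hap, inv_one]⟩ }
  have hmemD : ∀ x : P, x ∈ D ↔ x ∈ C ∧ x ^ p = 1 := fun _ => Iff.rfl
  have hDchar : D.Characteristic := by
    apply char_of_fixed
    intro φ x hx
    rw [hmemD] at hx ⊢
    exact ⟨(mem_char_iff hCchar φ x).mpr hx.1, by rw [← map_pow, hx.2, map_one]⟩
  -- conclusion 3
  have hDconj : ∀ x ∈ D, ∀ g : P, g * x * g⁻¹ ∈ D := by
    intro x hx g
    rw [hmemD] at hx ⊢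
    refine ⟨hCn.conj_mem x hx.1 g, ?_⟩
    rw [conj_pow, hx.2, mul_one, mul_inv_cancel]
  have hcomm3 : ⁅D, (⊤ : Subgroup P)⁆ ≤ D ⊓ Subgroup.centralizer (D : Set P) := by
    rw [Subgroup.commutator_le]
    intro d hd g _
    refine Subgroup.mem_inf.mpr ⟨?_, ?_⟩
    · have h1 : g * d⁻¹ * g⁻¹ ∈ D := hDconj d⁻¹ (inv_mem hd) g
      have h2 : ⁅d, g⁆ = d * (g * d⁻¹ * g⁻¹) := by rw [commutatorElement_def]; group
      rw [h2]; exact mul_mem hd h1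
    · rw [Subgroup.mem_centralizer_iff]
      intro y hy
      have hyD : y ∈ D := hy
      exact ((hCcomm d ((hmemD d).mp hd).1 g).2 y ((hmemD y).mp hyD).1).symm.eq
  -- K and Z
  set K : Subgroup P := Subgroup.centralizer (C : Set P) with hK
  have hKchar : K.Characteristic := by
    apply char_of_fixed
    intro φ x hx
    rw [hK, Subgroup.mem_centralizer_iff] at hx ⊢
    intro y hy
    have hy' : φ.symm y ∈ C := by
      rw [← mem_char_iff hCchar φ (φ.symm y), φ.apply_symm_apply]; exact hy
    have h1 := hx (φ.symm y) hy'
    have h2 := congrArg φ h1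
    simp only [map_mul, φ.apply_symm_apply] at h2
    exact h2
  set Zc : Subgroup P := C ⊓ K with hZc
  have hZchar : Zc.Characteristic := by
    apply char_of_fixed
    intro φ x hx
    rw [hZc, Subgroup.mem_inf] at hx ⊢
    exact ⟨(mem_char_iff hCchar φ x).mpr hx.1, (mem_char_iff hKchar φ x).mpr hx.2⟩
  haveI := hKchar
  haveI := hZchar
  haveI hKn : K.Normal := inferInstance
  haveI hZn : Zc.Normal := inferInstance
  have hZC : Zc ≤ C := inf_le_left
  have hZK' : Zc ≤ K := inf_le_right
  have hKcomm : ∀ w ∈ K, ∀ c ∈ C, Commute c w := fun w hw c hc =>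
    Subgroup.mem_centralizer_iff.mp hw c hc
  -- the key: the centralizer of C is contained in C
  have hKC : K ≤ C := by
    by_contra hnot
    rw [SetLike.not_le_iff_exists] at hnot
    have hne : ∃ k ∈ K, k ∉ Zc := by
      obtain ⟨k, hkK, hkC⟩ := hnot
      exact ⟨k, hkK, fun h => hkC (Subgroup.mem_inf.mp h).1⟩
    obtain ⟨x, hxK, hxZ, hxp, hxcomm⟩ := exists_almost_central p hP K Zc inf_le_right hne
    -- the subgroup Y
    have hYmulpow : ∀ a b : P, a ∈ K → b ∈ K → a ^ p ∈ Zc → b ^ p ∈ Zc →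
        (∀ g : P, ⁅b, g⁆ ∈ Zc) → (a * b) ^ p = a ^ p * b ^ p := by
      intro a b haK hbK hap hbp hbcomm
      have hcZ : ⁅b⁻¹, a⁻¹⁆ ∈ Zc := by
        have h1 : ⁅b, a⁻¹⁆ ∈ Zc := hbcomm a⁻¹
        have h2 : ⁅b⁻¹, a⁻¹⁆ = b⁻¹ * ⁅b, a⁻¹⁆⁻¹ * b := by
          simp only [commutatorElement_def]; group
        rw [h2]
        simpa [mul_assoc] using hZn.conj_mem _ (inv_mem h1) b⁻¹
      have hceq : b⁻¹ * a⁻¹ * b * a = ⁅b⁻¹, a⁻¹⁆ := by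
        rw [commutatorElement_def]; group
      have hc_a : Commute ⁅b⁻¹, a⁻¹⁆ a := hKcomm a haK _ (hZC hcZ)
      have hc_b : Commute ⁅b⁻¹, a⁻¹⁆ b := hKcomm b hbK _ (hZC hcZ)
      have h3 : b⁻¹ * a ^ p * b = a ^ p := by
        have hc := (hKcomm b hbK _ (hZC hap)).eq
        calc b⁻¹ * a ^ p * b = b⁻¹ * (a ^ p * b) := by group
          _ = b⁻¹ * (b * a ^ p) := by rw [hc]
          _ = a ^ p := by group
      exact mul_pow_odd_prime hp a b _ hceq hc_a hc_b h3
    let Y : Subgroup P :=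
      { carrier := {w : P | w ∈ K ∧ w ^ p ∈ Zc ∧ ∀ g : P, ⁅w, g⁆ ∈ Zc}
        one_mem' := ⟨Subgroup.one_mem K, by rw [one_pow]; exact Subgroup.one_mem Zc,
          fun g => by
            have h1 : ⁅(1 : P), g⁆ = 1 := by rw [commutatorElement_def]; group
            rw [h1]; exact Subgroup.one_mem Zc⟩
        mul_mem' := by
          rintro a b ⟨haK, hap, hacomm⟩ ⟨hbK, hbp, hbcomm⟩
          refine ⟨mul_mem haK hbK, ?_, ?_⟩
          · rw [hYmulpow a b haK hbK hap hbp hbcomm]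
            exact mul_mem hap hbp
          · intro g
            have hsplit : ⁅a * b, g⁆ = (a * ⁅b, g⁆ * a⁻¹) * ⁅a, g⁆ := by
              simp only [commutatorElement_def]; group
            rw [hsplit]
            exact mul_mem (hZn.conj_mem _ (hbcomm g) a) (hacomm g)
        inv_mem' := by
          rintro a ⟨haK, hap, hacomm⟩
          refine ⟨inv_mem haK, by rw [inv_pow]; exact inv_mem hap, ?_⟩
          intro g
          have h1 : ⁅a⁻¹, g⁆ = a⁻¹ * ⁅a, g⁆⁻¹ * a := by
            simp only [commutatorElement_def]; group
          rw [h1]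
          simpa [mul_assoc] using hZn.conj_mem _ (inv_mem (hacomm g)) a⁻¹ }
    have hmemY : ∀ w : P, w ∈ Y ↔ w ∈ K ∧ w ^ p ∈ Zc ∧ ∀ g : P, ⁅w, g⁆ ∈ Zc :=
      fun _ => Iff.rfl
    have hYchar : Y.Characteristic := by
      apply char_of_fixed
      intro φ w hw
      rw [hmemY] at hw ⊢
      obtain ⟨h1, h2, h3⟩ := hw
      refine ⟨(mem_char_iff hKchar φ w).mpr h1, ?_, ?_⟩
      · rw [← map_pow]; exact (mem_char_iff hZchar φ _).mpr h2
      · intro g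
        have h4 : ⁅φ w, g⁆ = φ ⁅w, φ.symm g⁆ := by
          simp only [commutatorElement_def, map_mul, map_inv, φ.apply_symm_apply]
        rw [h4]
        exact (mem_char_iff hZchar φ _).mpr (h3 (φ.symm g))
    haveI := hYchar
    haveI hYn : Y.Normal := inferInstance
    -- decomposition of the join
    have hdecomp : ∀ u ∈ C ⊔ Y, ∃ c ∈ C, ∃ y ∈ Y, u = c * y := by
      intro u hu
      have h1 : u ∈ (↑(C ⊔ Y) : Set P) := hu
      rw [Subgroup.mul_normal] at h1
      obtain ⟨c, hc, y, hy, hcy⟩ := h1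
      exact ⟨c, hc, y, hy, hcy.symm⟩
    have hFamSup : Fam (C ⊔ Y) := by
      refine ⟨?_, ?_, ?_⟩
      · apply char_of_fixed
        intro φ u hu
        obtain ⟨c, hc, y, hy, rfl⟩ := hdecomp u hu
        rw [map_mul]
        exact mul_mem (Subgroup.mem_sup_left ((mem_char_iff hCchar φ c).mpr hc))
          (Subgroup.mem_sup_right ((mem_char_iff hYchar φ y).mpr hy))
      · intro u hu v hv
        obtain ⟨c, hc, y, hy, rfl⟩ := hdecomp u hu
        obtain ⟨c', hc', y', hy', rfl⟩ := hdecomp v hv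
        obtain ⟨hyK, hyp, hycomm⟩ := (hmemY y).mp hy
        obtain ⟨hy'K, hy'p, hy'comm⟩ := (hmemY y').mp hy'
        have hcy : Commute c y := hKcomm y hyK c hc
        rw [hcy.mul_pow]
        have h1 : Commute (c ^ p) c' := hCpow c hc c' hc'
        have h2 : Commute (c ^ p) y' := hKcomm y' hy'K _ (pow_mem hc p)
        have h3 : Commute (y ^ p) c' := (hKcomm (y ^ p) (hZK' hyp) c' hc').symm
        have h4 : Commute (y ^ p) y' := hKcomm y' hy'K (y ^ p) (hZC hyp)
        exact Commute.mul_left (h1.mul_right h2) (h3.mul_right h4)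
      · intro u hu g
        obtain ⟨c, hc, y, hy, rfl⟩ := hdecomp u hu
        obtain ⟨hyK, hyp, hycomm⟩ := (hmemY y).mp hy
        have hsplit : ⁅c * y, g⁆ = (c * ⁅y, g⁆ * c⁻¹) * ⁅c, g⁆ := by
          simp only [commutatorElement_def]; group
        have hzmem : c * ⁅y, g⁆ * c⁻¹ ∈ Zc := hZn.conj_mem _ (hycomm g) c
        obtain ⟨hcgC, hcgcomm⟩ := hCcomm c hc g
        constructor
        · rw [hsplit]
          exact mul_mem (Subgroup.mem_sup_left (hZC hzmem)) (Subgroup.mem_sup_left hcgC)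
        · intro v hv
          obtain ⟨c', hc', y', hy', rfl⟩ := hdecomp v hv
          obtain ⟨hy'K, hy'p, hy'comm⟩ := (hmemY y').mp hy'
          rw [hsplit]
          have e1 : Commute (c * ⁅y, g⁆ * c⁻¹) c' := (hKcomm _ (hZK' hzmem) c' hc').symm
          have e2 : Commute (c * ⁅y, g⁆ * c⁻¹) y' := hKcomm y' hy'K _ (hZC hzmem)
          have e3 : Commute ⁅c, g⁆ c' := hcgcomm c' hc'
          have e4 : Commute ⁅c, g⁆ y' := hKcomm y' hy'K _ hcgC
          exact Commute.mul_left (e1.mul_right e2) (e3.mul_right e4)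
    have heq := le_antisymm le_sup_left (hCmax (j := C ⊔ Y) hFamSup le_sup_left)
    have hxY : x ∈ Y := (hmemY x).mpr ⟨hxK, hxp, hxcomm⟩
    have hxC : x ∈ C := by
      rw [heq]
      exact Subgroup.mem_sup_right hxY
    exact hxZ (Subgroup.mem_inf.mpr ⟨hxC, hxK⟩)
  -- conclusion
  refine ⟨D, hDchar, fun x hx => ((hmemD x).mp hx).2, hcomm3, ?_⟩
  intro φ hcop hfixD
  -- iteration lemmas
  have hfixpow : ∀ u : P, φ u = u → ∀ m : ℕ, (φ ^ m) u = u := by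
    intro u hu m
    induction m with
    | zero => rfl
    | succ m ih => rw [pow_succ, MulAut.mul_apply, hu, ih]
  have hiter : ∀ x u : P, φ x = x * u → φ u = u → ∀ m : ℕ, (φ ^ m) x = x * u ^ m := by
    intro x u hx hu m
    induction m with
    | zero => simp
    | succ m ih =>
      have h1 : (φ ^ (m + 1)) x = φ ((φ ^ m) x) := by rw [pow_succ', MulAut.mul_apply]
      rw [h1, ih, map_mul, hx, map_pow, hu, pow_succ']
      group
  have hkill : ∀ (x u : P) (k : ℕ), φ x = x * u → φ u = u → u ^ p ^ k = 1 → φ x = x := by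
    intro x u k hx hu hup
    have h1 : (φ ^ orderOf φ) x = x := by rw [pow_orderOf_eq_one]; rfl
    rw [hiter x u hx hu (orderOf φ)] at h1
    have h2 : u ^ orderOf φ = 1 := by
      have := h1
      rwa [mul_eq_left] at this
    have hdvd1 : orderOf u ∣ orderOf φ := orderOf_dvd_of_pow_eq_one h2
    have hdvd2 : orderOf u ∣ p ^ k := orderOf_dvd_of_pow_eq_one hup
    have hcop' : Nat.Coprime (orderOf φ) (p ^ k) := hcop.pow_right k
    have hdvd3 : orderOf u ∣ 1 := by
      have := Nat.dvd_gcd hdvd1 hdvd2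
      rwa [Nat.Coprime.gcd_eq_one hcop'] at this
    have hu1 : u = 1 := orderOf_eq_one_iff.mp (Nat.dvd_one.mp hdvd3)
    rw [hx, hu1, mul_one]
  -- φ fixes C pointwise
  have hfixC : ∀ x ∈ C, φ x = x := by
    have main : ∀ n : ℕ, ∀ x, x ∈ C → x ^ p ^ n = 1 → φ x = x := by
      intro n
      induction n with
      | zero =>
        intro x hx hord
        rw [pow_zero, pow_one] at hord
        rw [hord]; exact map_one φ
      | succ n ih =>
        intro x hx hord
        have hxpC : x ^ p ∈ C := pow_mem hx p
        have hxp_ord : (x ^ p) ^ p ^ n = 1 := by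
          rw [← pow_mul, ← pow_succ']
          exact hord
        have hIH := ih (x ^ p) hxpC hxp_ord
        have hφxC : φ x ∈ C := (mem_char_iff hCchar φ x).mpr hx
        set u := x⁻¹ * φ x with hu
        have huC : u ∈ C := mul_mem (inv_mem hx) hφxC
        have hup : u ^ p = 1 := by
          rw [hu, hCpsi x⁻¹ (inv_mem hx) (φ x) hφxC, inv_pow, ← map_pow, hIH,
            inv_mul_cancel]
        have hxu : φ x = x * u := by rw [hu]; group
        have hufix : φ u = u := hfixD u ((hmemD u).mpr ⟨huC, hup⟩)
        exact hkill x u 1 hxu hufix (by rw [pow_one]; exact hup)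
    intro x hx
    obtain ⟨k, hk⟩ := hP x
    exact main k x hx hk
  -- φ is the identity
  have hfixall : ∀ y : P, φ y = y := by
    intro y
    set w := (φ y)⁻¹ * y with hw
    have hwK : w ∈ K := by
      rw [hK, Subgroup.mem_centralizer_iff]
      intro m hm
      have h1 : y * m * y⁻¹ ∈ C := hCn.conj_mem m hm y
      have h2 : φ (y * m * y⁻¹) = y * m * y⁻¹ := hfixC _ h1
      rw [map_mul, map_mul, map_inv, hfixC m hm] at h2
      have h3 := congrArg (fun t => (φ y)⁻¹ * t * y) h2
      calc m * ((φ y)⁻¹ * y) = (φ y)⁻¹ * (φ y * m * (φ y)⁻¹) * y := by group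
        _ = (φ y)⁻¹ * (y * m * y⁻¹) * y := h3
        _ = ((φ y)⁻¹ * y) * m := by group
    have hwC : w ∈ C := hKC hwK
    have hwfix : φ w⁻¹ = w⁻¹ := by rw [map_inv, hfixC w hwC]
    have hxw : φ y = y * w⁻¹ := by rw [hw]; group
    obtain ⟨k, hk⟩ := hP w⁻¹
    have := hkill y w⁻¹ k hxw hwfix hk
    rw [hxw] at this ⊢
    exact this
  refine DFunLike.ext φ 1 fun y => ?_
  rw [hfixall y, MulAut.one_apply]
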